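/- Let $X_k$, $k\in\mathbb{N}$, be Banach spaces each with a normalized Schauder basis $(e_{(k,j)})_j$ of basis constant at most $\lambda$, let $Y = c_0(X_k : k \in \mathbb{N})$, and enumerate the array $(e_{(k,j)})$ into a sequence $(e_n)$ via a bijection $\nu: \mathbb{N}^2 \to \mathbb{N}$ that is increasing in the second coordinate. If $y = \sum_{n=1}^\infty a_n e_n \in Y$ in the sense that the partial sums converge to $y$ in the product topology (coordinatewise in each $X_k$) and $y \in Y$, then the series $\sum_{n=1}^\infty a_n e_n$ converges to $y$ in the norm of $Y$. -/

import Mathlib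

open Finset
open scoped ENNReal

/-- If the array `(e_{(k,j)})` of normalized Schauder bases (basis constant at most `λ`) is
enumerated into `(e_n)` via a bijection `ν` increasing in the second coordinate, and the
partial sums of `∑ a_n e_n` converge coordinatewise to an element `y` of the `c₀`-sum
`Y = c₀(X_k)`, then the series converges to `y` in norm. -/
theorem coordinatewise_convergence_to_c0_implies_norm_convergence
    (X : ℕ → Type*) [∀ k, NormedAddCommGroup (X k)] [∀ k, NormedSpace ℝ (X k)]
    [∀ k, CompleteSpace (X k)]
    (lam : ℝ) (hlam : 1 ≤ lam)
    (e : ∀ k, ℕ → X k) (henorm : ∀ k j, ‖e k j‖ = 1)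
    (hbasisconst : ∀ k (a : ℕ → ℝ) (m n : ℕ), m ≤ n →
      ‖∑ j ∈ Finset.range m, a j • e k j‖ ≤ lam * ‖∑ j ∈ Finset.range n, a j • e k j‖)
    (ν : ℕ × ℕ ≃ ℕ) (hν : ∀ k i j, ν (k, i) < ν (k, j) ↔ i < j)
    (E : ℕ → lp X ∞)
    (hE : ∀ n : ℕ, E n = lp.single ∞ (ν.symm n).1 (e (ν.symm n).1 (ν.symm n).2))
    (a : ℕ → ℝ) (y : lp X ∞)
    (hy : Filter.Tendsto (fun k => ‖(y : ∀ k, X k) k‖) Filter.atTop (nhds 0))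
    (hcoord : ∀ k : ℕ, Filter.Tendsto
      (fun N => ((∑ n ∈ Finset.range N, a n • E n : lp X ∞) : ∀ k, X k) k)
      Filter.atTop (nhds ((y : ∀ k, X k) k))) :
    Filter.Tendsto (fun N => ∑ n ∈ Finset.range N, a n • E n) Filter.atTop (nhds y) := by
  classical
  have hmono : ∀ k, StrictMono (fun j => ν (k, j)) := fun k i j h => (hν k i j).mpr h
  have hge : ∀ k j, j ≤ ν (k, j) := fun k j => (hmono k).le_apply
  -- the cut-off in coordinate k at stage N
  set c : ℕ → ℕ → ℕ := fun k N => sInf {m | N ≤ ν (k, m)} with hc_def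
  have hne : ∀ k N, {m | N ≤ ν (k, m)}.Nonempty := fun k N => ⟨N, hge k N⟩
  have hc_iff : ∀ k N j, j < c k N ↔ ν (k, j) < N := by
    intro k N j
    constructor
    · intro h
      by_contra h'
      push_neg at h'
      have : c k N ≤ j := Nat.sInf_le h'
      omega
    · intro h
      by_contra h'
      push_neg at h'
      have h1 : N ≤ ν (k, c k N) := Nat.sInf_mem (hne k N)
      have h2 : ν (k, c k N) ≤ ν (k, j) := (hmono k).monotone h'
      omega
  have hcmono : ∀ k, Monotone (c k) := by
    intro k N N' hNN'
    by_contra h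
    push_neg at h
    have h1 : ν (k, c k N') < N := (hc_iff k N (c k N')).mp h
    have h2 : c k N' < c k N' := (hc_iff k N' (c k N')).mpr (lt_of_lt_of_le h1 hNN')
    exact lt_irrefl _ h2
  -- the coordinate formula for partial sums
  have hScoord : ∀ N k, ((∑ n ∈ Finset.range N, a n • E n : lp X ∞) : ∀ k, X k) k
      = ∑ j ∈ Finset.range (c k N), a (ν (k, j)) • e k j := by
    intro N k
    have hcoe : ((∑ n ∈ Finset.range N, a n • E n : lp X ∞) : ∀ k, X k) k
        = ∑ n ∈ Finset.range N, a n • ((E n : ∀ k, X k) k) := by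
      rw [lp.coeFn_sum, Finset.sum_apply]
      exact Finset.sum_congr rfl fun n _ => by rw [lp.coeFn_smul, Pi.smul_apply]
    rw [hcoe]
    have hsub : (Finset.range (c k N)).image (fun j => ν (k, j)) ⊆ Finset.range N := by
      intro n hn
      simp only [Finset.mem_image, Finset.mem_range] at hn ⊢
      obtain ⟨j, hj, rfl⟩ := hn
      exact (hc_iff k N j).mp hj
    rw [← Finset.sum_subset hsub, Finset.sum_image]
    · refine Finset.sum_congr rfl fun j _ => ?_
      have hsymm : ν.symm (ν (k, j)) = (k, j) := ν.symm_apply_apply _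
      rw [hE]
      congr 1
      rw [hsymm]
      exact lp.single_apply_self ∞ k (e k j)
    · intro i _ j _ hij
      exact (Prod.mk.injEq _ _ _ _ ▸ ν.injective hij).2
    · intro n hn hn'
      have hk : (ν.symm n).1 ≠ k := by
        intro hk
        apply hn'
        simp only [Finset.mem_image, Finset.mem_range]
        refine ⟨(ν.symm n).2, ?_, ?_⟩
        · rw [hc_iff]
          have : ν (k, (ν.symm n).2) = n := by
            conv_rhs => rw [← ν.apply_symm_apply n]
            congr 1
            rw [← hk]
          rw [this]
          exact Finset.mem_range.mp hn
        · conv_rhs => rw [← ν.apply_symm_apply n]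
          congr 1
          rw [← hk]
      rw [hE, lp.single_apply_ne ∞ _ _ (Ne.symm hk), smul_zero]
  -- the uniform bound on coordinates of partial sums
  have hbound : ∀ k N, ‖((∑ n ∈ Finset.range N, a n • E n : lp X ∞) : ∀ k, X k) k‖
      ≤ lam * ‖(y : ∀ k, X k) k‖ := by
    intro k N
    have hlim : Filter.Tendsto
        (fun N' => lam * ‖((∑ n ∈ Finset.range N', a n • E n : lp X ∞) : ∀ k, X k) k‖)
        Filter.atTop (nhds (lam * ‖(y : ∀ k, X k) k‖)) :=
      ((hcoord k).norm.const_mul lam)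
    refine ge_of_tendsto hlim ?_
    rw [Filter.eventually_atTop]
    refine ⟨N, fun N' hN' => ?_⟩
    rw [hScoord N k, hScoord N' k]
    exact hbasisconst k (fun j => a (ν (k, j))) (c k N) (c k N') (hcmono k hN')
  -- the epsilon argument
  rw [Metric.tendsto_atTop]
  intro ε hε
  have hlam0 : (0:ℝ) < lam + 1 := by linarith
  set δ : ℝ := ε / (2 * (lam + 1)) with hδ_def
  have hδ : 0 < δ := by positivity
  obtain ⟨K, hK⟩ := (Metric.tendsto_atTop.mp hy) δ hδ
  have hchoice : ∀ k, ∃ M, ∀ N ≥ M,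
      ‖((∑ n ∈ Finset.range N, a n • E n : lp X ∞) : ∀ k, X k) k - (y : ∀ k, X k) k‖ < ε/2 := by
    intro k
    obtain ⟨M, hM⟩ := (Metric.tendsto_atTop.mp (hcoord k)) (ε/2) (by positivity)
    exact ⟨M, fun N hN => by simpa [dist_eq_norm] using hM N hN⟩
  choose M hM using hchoice
  refine ⟨(Finset.range K).sup M, fun N hN => ?_⟩
  rw [dist_eq_norm]
  have hle : ‖(∑ n ∈ Finset.range N, a n • E n : lp X ∞) - y‖ ≤ ε/2 := by
    refine lp.norm_le_of_forall_le (by positivity) fun k => ?_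
    have hco : ((((∑ n ∈ Finset.range N, a n • E n : lp X ∞) - y : lp X ∞)) : ∀ k, X k) k
        = ((∑ n ∈ Finset.range N, a n • E n : lp X ∞) : ∀ k, X k) k - (y : ∀ k, X k) k := by
      rw [lp.coeFn_sub, Pi.sub_apply]
    rw [hco]
    by_cases hk : k < K
    · have hMk : M k ≤ (Finset.range K).sup M :=
        Finset.le_sup (Finset.mem_range.mpr hk)
      exact le_of_lt (hM k N (le_trans hMk hN))
    · push_neg at hk
      have hyk : ‖(y : ∀ k, X k) k‖ < δ := by
        have := hK k hk
        rw [Real.dist_eq, sub_zero, abs_of_nonneg (norm_nonneg _)] at this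
        exact this
      calc ‖((∑ n ∈ Finset.range N, a n • E n : lp X ∞) : ∀ k, X k) k - (y : ∀ k, X k) k‖
          ≤ ‖((∑ n ∈ Finset.range N, a n • E n : lp X ∞) : ∀ k, X k) k‖ + ‖(y : ∀ k, X k) k‖ :=
            norm_sub_le _ _
        _ ≤ lam * ‖(y : ∀ k, X k) k‖ + ‖(y : ∀ k, X k) k‖ := by
            have := hbound k N; linarith
        _ = (lam + 1) * ‖(y : ∀ k, X k) k‖ := by ring
        _ ≤ (lam + 1) * δ := by
            exact mul_le_mul_of_nonneg_left hyk.le (by linarith)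
        _ = ε/2 := by
            rw [hδ_def]; field_simp
  linarith
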